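/- Let E be a CPTP map on d×d matrices with Kraus operators of the block form K_i = [[η_i, v_i†],[0, L_i]], and let ρ = [[α, x†],[x, A]] be a density matrix with A invertible and output σ = [[β, y†],[y, B]] with B invertible. Then the Schur complements satisfy c_σ := β − y† B^{−1} y ≥ c_ρ := α − x† A^{−1} x. -/

import Mathlib

open Finset Matrix
open scoped ComplexOrder

lemma psd_sum {n k : Type*} [Fintype n] [Fintype k] (f : k → Matrix n n ℂ)
    (h : ∀ i, (f i).PosSemidef) : (∑ i, f i).PosSemidef := by
  classical
  refine Finset.sum_induction f _ (fun a b ha hb => ha.add hb) ?_ (fun i _ => h i)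
  exact Matrix.PosSemidef.zero

lemma psd_unit_iff (N : Matrix Unit Unit ℂ) :
    N.PosSemidef ↔ 0 ≤ N () () := by
  constructor
  · intro h
    have := h.dotProduct_mulVec_nonneg (fun _ => 1)
    simpa [Matrix.mulVec, dotProduct] using this
  · intro h
    refine .of_dotProduct_mulVec_nonneg ?_ ?_
    · ext i j
      have him := (Complex.le_def.mp h).2
      simp only [conjTranspose_apply]
      apply Complex.ext <;> simp [← him]
    · intro v
      have : star v ⬝ᵥ N.mulVec v = (star (v ()) * v ()) * N () () := by
        simp [Matrix.mulVec, dotProduct]; ring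
      rw [this]
      exact mul_nonneg (star_mul_self_nonneg _) h

lemma posdef_of_psd {n : Type*} [Fintype n] [DecidableEq n] {M : Matrix n n ℂ}
    (h : M.PosSemidef) (hd : IsUnit M.det) : M.PosDef := by
  refine .of_dotProduct_mulVec_pos h.1 fun v hv => (h.dotProduct_mulVec_nonneg v).lt_of_ne' ?_
  intro heq
  rw [h.dotProduct_mulVec_zero_iff] at heq
  exact hv (Matrix.mulVec_injective_iff_isUnit.mpr ((Matrix.isUnit_iff_isUnit_det _).mpr hd)
    (by simpa using heq))

lemma schur_entry {m : ℕ} (M : Matrix (Unit ⊕ Fin m) (Unit ⊕ Fin m) ℂ)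
    (hH : M.IsHermitian) {D : Matrix (Fin m) (Fin m) ℂ}
    (hD : D = Matrix.of fun a b => M (Sum.inr a) (Sum.inr b))
    (hDpd : D.PosDef) (w : Fin m → ℂ) (hw : w = fun a => M (Sum.inr a) (Sum.inl ())) :
    M.PosSemidef ↔ 0 ≤ M (Sum.inl ()) (Sum.inl ()) - star w ⬝ᵥ D⁻¹.mulVec w := by
  classical
  have hherm : ∀ j, M (Sum.inl ()) (Sum.inr j) = star (M (Sum.inr j) (Sum.inl ())) := by
    intro j
    conv_lhs => rw [← hH.eq]
    simp [conjTranspose_apply]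
  set a : Matrix Unit Unit ℂ := Matrix.of fun _ _ => M (Sum.inl ()) (Sum.inl ()) with ha
  set b : Matrix Unit (Fin m) ℂ := Matrix.of fun _ j => star (w j) with hb
  have hM : M = Matrix.fromBlocks a b bᴴ D := by
    ext i j
    cases i with
    | inl i => cases j with
      | inl j => simp [ha]
      | inr j => simp [hb, hw, hherm j]
    | inr i => cases j with
      | inl j => simp [hb, hw, conjTranspose_apply]
      | inr j => simp [hD]
  haveI : Invertible D := hDpd.isUnit.invertible
  rw [hM, Matrix.PosDef.fromBlocks₂₂ a b hDpd, psd_unit_iff]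
  have : (a - b * D⁻¹ * bᴴ) () () =
      M (Sum.inl ()) (Sum.inl ()) - star w ⬝ᵥ D⁻¹.mulVec w := by
    simp only [Matrix.sub_apply, ha, Matrix.of_apply, Matrix.mul_apply,
      conjTranspose_apply, hb, dotProduct, Matrix.mulVec, Finset.sum_mul]
    congr 1
    rw [Finset.sum_comm]
    refine Finset.sum_congr rfl fun j _ => ?_
    rw [Finset.mul_sum]
    refine Finset.sum_congr rfl fun k _ => ?_
    simp; ring
  rw [this]
  simp [hM]

theorem gibbs_preserving_schur_monotone
    (m r : ℕ) (η : Fin r → ℂ) (v : Fin r → Fin m → ℂ)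
    (L : Fin r → Matrix (Fin m) (Fin m) ℂ)
    (K : Fin r → Matrix (Unit ⊕ Fin m) (Unit ⊕ Fin m) ℂ)
    (hK : ∀ i, K i = Matrix.fromBlocks (Matrix.of fun _ _ => η i)
      (Matrix.replicateRow Unit fun j => star (v i j)) 0 (L i))
    (htp : ∑ i, (K i)ᴴ * K i = 1)
    (ρ : Matrix (Unit ⊕ Fin m) (Unit ⊕ Fin m) ℂ)
    (hρ : ρ.PosSemidef) (hρtr : ρ.trace = 1)
    (A : Matrix (Fin m) (Fin m) ℂ) (hA : A = Matrix.of fun a b => ρ (Sum.inr a) (Sum.inr b))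
    (x : Fin m → ℂ) (hx : x = fun a => ρ (Sum.inr a) (Sum.inl ()))
    (hAinv : IsUnit A.det)
    (σ : Matrix (Unit ⊕ Fin m) (Unit ⊕ Fin m) ℂ)
    (hσ : σ = ∑ i, K i * ρ * (K i)ᴴ)
    (B : Matrix (Fin m) (Fin m) ℂ) (hB : B = Matrix.of fun a b => σ (Sum.inr a) (Sum.inr b))
    (y : Fin m → ℂ) (hy : y = fun a => σ (Sum.inr a) (Sum.inl ()))
    (hBinv : IsUnit B.det) :
    (ρ (Sum.inl ()) (Sum.inl ()) - star x ⬝ᵥ A⁻¹.mulVec x).re ≤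
      (σ (Sum.inl ()) (Sum.inl ()) - star y ⬝ᵥ B⁻¹.mulVec y).re := by
  classical
  -- positive definiteness of the corner blocks
  have hApsd : A.PosSemidef := by
    have : A = ρ.submatrix Sum.inr Sum.inr := by rw [hA]; rfl
    rw [this]; exact hρ.submatrix _
  have hApd : A.PosDef := posdef_of_psd hApsd hAinv
  have hσpsd : σ.PosSemidef := by
    rw [hσ]
    exact psd_sum _ fun i => hρ.mul_mul_conjTranspose_same (K i)
  have hBpsd : B.PosSemidef := by
    have : B = σ.submatrix Sum.inr Sum.inr := by rw [hB]; rfl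
    rw [this]; exact hσpsd.submatrix _
  have hBpd : B.PosDef := posdef_of_psd hBpsd hBinv
  set c : ℂ := ρ (Sum.inl ()) (Sum.inl ()) - star x ⬝ᵥ A⁻¹.mulVec x with hc
  -- c is nonneg
  have hcpos : 0 ≤ c := (schur_entry ρ hρ.1 hA hApd x hx).mp hρ
  have hcstar : star c = c := by
    have := (Complex.le_def.mp hcpos).2
    apply Complex.ext <;> simp [← this]
  -- the rank-one corner matrix
  set E : Matrix (Unit ⊕ Fin m) (Unit ⊕ Fin m) ℂ :=
    Matrix.fromBlocks 1 0 0 0 with hE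
  have hEH : Eᴴ = E := by
    ext i j; cases i <;> cases j <;> simp [hE, Matrix.conjTranspose_apply, Matrix.one_apply]
  -- P = ρ - c • E is PSD
  set P : Matrix (Unit ⊕ Fin m) (Unit ⊕ Fin m) ℂ := ρ - c • E with hP
  have hPH : P.IsHermitian := by
    unfold P
    unfold Matrix.IsHermitian
    rw [conjTranspose_sub, conjTranspose_smul, hEH, hρ.1.eq, hcstar]
  have hPA : A = Matrix.of fun a b => P (Sum.inr a) (Sum.inr b) := by
    rw [hA]; ext a b; simp [hP, hE]
  have hPx : x = fun a => P (Sum.inr a) (Sum.inl ()) := by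
    rw [hx]; ext a; simp [hP, hE]
  have hPpsd : P.PosSemidef := by
    rw [schur_entry P hPH hPA hApd x hPx]
    have : P (Sum.inl ()) (Sum.inl ()) = ρ (Sum.inl ()) (Sum.inl ()) - c := by
      simp [hP, hE, Matrix.one_apply]
    rw [this, hc]
    ring_nf
    simp
  -- trace-preservation at the corner: ∑ |η i|² = 1
  have hηsum : ∑ i, star (η i) * η i = 1 := by
    have h1 := congrArg (fun M => M (Sum.inl ()) (Sum.inl ())) htp
    simp only [Matrix.sum_apply, Matrix.mul_apply, Matrix.one_apply, Matrix.conjTranspose_apply,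
      Fintype.sum_sum_type] at h1
    simpa [hK, Matrix.fromBlocks_apply₁₁, Matrix.fromBlocks_apply₂₁] using h1
  -- the channel fixes E
  have hKE : ∀ i, K i * E * (K i)ᴴ = (star (η i) * η i) • E := by
    intro i
    ext a b
    cases a <;> cases b <;>
      simp [hK, hE, Matrix.mul_apply, Matrix.conjTranspose_apply, Fintype.sum_sum_type,
        Matrix.one_apply, mul_comm]
  -- Q = σ - c • E is PSD
  set Q : Matrix (Unit ⊕ Fin m) (Unit ⊕ Fin m) ℂ := σ - c • E with hQ
  have hQsum : Q = ∑ i, K i * P * (K i)ᴴ := by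
    have : ∑ i, K i * P * (K i)ᴴ
        = (∑ i, K i * ρ * (K i)ᴴ) - c • ∑ i, K i * E * (K i)ᴴ := by
      rw [Finset.smul_sum, ← Finset.sum_sub_distrib]
      refine Finset.sum_congr rfl fun i _ => ?_
      simp [hP, Matrix.mul_sub, Matrix.sub_mul, Matrix.mul_smul, Matrix.smul_mul]
    rw [hQ, hσ, this]
    congr 1
    simp_rw [hKE]
    rw [← Finset.sum_smul, hηsum, one_smul]
  have hQpsd : Q.PosSemidef := by
    rw [hQsum]
    exact psd_sum _ fun i => hPpsd.mul_mul_conjTranspose_same (K i)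
  have hQH : Q.IsHermitian := hQpsd.1
  have hQB : B = Matrix.of fun a b => Q (Sum.inr a) (Sum.inr b) := by
    rw [hB]; ext a b; simp [hQ, hE]
  have hQy : y = fun a => Q (Sum.inr a) (Sum.inl ()) := by
    rw [hy]; ext a; simp [hQ, hE]
  have key : 0 ≤ Q (Sum.inl ()) (Sum.inl ()) - star y ⬝ᵥ B⁻¹.mulVec y :=
    (schur_entry Q hQH hQB hBpd y hQy).mp hQpsd
  have hQ11 : Q (Sum.inl ()) (Sum.inl ()) = σ (Sum.inl ()) (Sum.inl ()) - c := by
    simp [hQ, hE, Matrix.one_apply]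
  rw [hQ11] at key
  have := (Complex.le_def.mp key).1
  simp only [Complex.sub_re, Complex.zero_re] at this ⊢
  linarith
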